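/- Fix m ∈ ℝ and define g : (0, ∞) → ℝ by g(σ) = m Φ(m/σ) + σ φ(m/σ), where Φ and φ are the cumulative distribution function and probability density function of the standard normal distribution. Then g is differentiable on (0, ∞) with g′(σ) = φ(m/σ) > 0 for every σ > 0; in particular, g is strictly increasing on (0, ∞). -/

import Mathlib

open MeasureTheory

/-- The probability density function `φ` of the standard normal distribution. -/
noncomputable def stdNormalPdf (x : ℝ) : ℝ :=
  (Real.sqrt (2 * Real.pi))⁻¹ * Real.exp (-x ^ 2 / 2)

/-- The cumulative distribution function `Φ` of the standard normal distribution. -/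
noncomputable def stdNormalCdf (x : ℝ) : ℝ :=
  ∫ t in Set.Iic x, stdNormalPdf t

lemma stdNormalPdf_pos (x : ℝ) : 0 < stdNormalPdf x := by
  have h : 0 < Real.sqrt (2 * Real.pi) := Real.sqrt_pos.2 (by positivity)
  exact mul_pos (inv_pos.2 h) (Real.exp_pos _)

lemma stdNormalPdf_continuous : Continuous stdNormalPdf := by
  unfold stdNormalPdf
  fun_prop

lemma stdNormalPdf_integrable : Integrable stdNormalPdf := by
  have h : Integrable (fun x : ℝ => Real.exp (-(1/2) * x ^ 2)) :=
    integrable_exp_neg_mul_sq (by norm_num)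
  have := h.const_mul (Real.sqrt (2 * Real.pi))⁻¹
  refine this.congr ?_
  filter_upwards with x
  unfold stdNormalPdf
  ring_nf

lemma hasDerivAt_stdNormalCdf (x : ℝ) :
    HasDerivAt stdNormalCdf (stdNormalPdf x) x := by
  have key : ∀ y : ℝ, stdNormalCdf y = stdNormalCdf 0 + ∫ t in (0:ℝ)..y, stdNormalPdf t := by
    intro y
    have := intervalIntegral.integral_Iic_sub_Iic
      (stdNormalPdf_integrable.integrableOn (s := Set.Iic (0:ℝ)))
      (stdNormalPdf_integrable.integrableOn (s := Set.Iic y))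
    unfold stdNormalCdf
    linarith [this]
  have h1 : HasDerivAt (fun y => ∫ t in (0:ℝ)..y, stdNormalPdf t) (stdNormalPdf x) x :=
    intervalIntegral.integral_hasDerivAt_right
      (stdNormalPdf_integrable.intervalIntegrable)
      (stdNormalPdf_continuous.stronglyMeasurableAtFilter _ _)
      (stdNormalPdf_continuous.continuousAt)
  have h2 := h1.const_add (stdNormalCdf 0)
  exact h2.congr_of_eventuallyEq (Filter.Eventually.of_forall fun y => key y)

lemma hasDerivAt_stdNormalPdf (x : ℝ) :
    HasDerivAt stdNormalPdf (-x * stdNormalPdf x) x := by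
  have h1 : HasDerivAt (fun y : ℝ => -y ^ 2 / 2) (-x) x := by
    have h : HasDerivAt (fun y : ℝ => -y ^ 2 / 2) (-(2 * x ^ 1) / 2) x :=
      (((hasDerivAt_pow 2 x).neg).div_const 2)
    convert h using 1
    ring
  have h2 := (h1.exp).const_mul (Real.sqrt (2 * Real.pi))⁻¹
  unfold stdNormalPdf
  refine h2.congr_deriv ?_
  ring

lemma hasDerivAt_g (m σ : ℝ) (hσ : 0 < σ) :
    HasDerivAt (fun s : ℝ => m * stdNormalCdf (m / s) + s * stdNormalPdf (m / s))
      (stdNormalPdf (m / σ)) σ := by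
  have hne : σ ≠ 0 := ne_of_gt hσ
  have hu : HasDerivAt (fun s : ℝ => m / s) (-m / σ ^ 2) σ := by
    simpa [div_eq_mul_inv, neg_div] using
      ((hasDerivAt_inv hne).const_mul m)
  have h1 : HasDerivAt (fun s : ℝ => stdNormalCdf (m / s))
      (stdNormalPdf (m / σ) * (-m / σ ^ 2)) σ :=
    (hasDerivAt_stdNormalCdf (m / σ)).comp σ hu
  have h2 : HasDerivAt (fun s : ℝ => stdNormalPdf (m / s))
      ((-(m / σ) * stdNormalPdf (m / σ)) * (-m / σ ^ 2)) σ :=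
    (hasDerivAt_stdNormalPdf (m / σ)).comp σ hu
  have h3 := (h1.const_mul m).add ((hasDerivAt_id σ).mul h2)
  refine h3.congr_deriv ?_
  simp only [id_eq]
  field_simp
  ring

/-- **Expected improvement is strictly increasing in the predictive standard deviation.**
For fixed `m`, the function `g(σ) = m Φ(m/σ) + σ φ(m/σ)` is differentiable on `(0, ∞)`
with derivative `g'(σ) = φ(m/σ) > 0`; in particular `g` is strictly increasing there. -/
theorem expected_improvement_strictMono_in_sigma (m : ℝ) :
    (∀ σ : ℝ, 0 < σ →
        HasDerivAt (fun s : ℝ => m * stdNormalCdf (m / s) + s * stdNormalPdf (m / s))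
          (stdNormalPdf (m / σ)) σ ∧ 0 < stdNormalPdf (m / σ)) ∧
      StrictMonoOn (fun s : ℝ => m * stdNormalCdf (m / s) + s * stdNormalPdf (m / s))
        (Set.Ioi 0) := by
  constructor
  · intro σ hσ
    exact ⟨hasDerivAt_g m σ hσ, stdNormalPdf_pos _⟩
  · apply StrictMonoOn.mono (s := Set.Ioi 0) ?_ le_rfl
    apply strictMonoOn_of_deriv_pos (convex_Ioi 0)
    · intro x hx
      exact ((hasDerivAt_g m x hx).continuousAt).continuousWithinAt
    · intro x hx
      rw [interior_Ioi] at hx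
      rw [(hasDerivAt_g m x hx).deriv]
      exact stdNormalPdf_pos _
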